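/- Let q be a prime power and 1 ≤ m ≤ q − 1. Then the multiplicity of the eigenvalue q of the adjacency matrix of the Wenger graph W_m(q) is exactly 1, and likewise the multiplicity of the eigenvalue −q is exactly 1. -/

import Mathlib

open Finset

/-- Adjacency relation of the Wenger graph `W_m(q)`: a point `p = (p_1, …, p_{m+1})`
(0-indexed here) is adjacent to a line `l = (l_1, …, l_{m+1})` iff
`l_{i+1} + p_{i+1} = l_i * p_1` for `i = 1, …, m`. -/
def wengerAdj {F : Type*} [Field F] {m : ℕ} (p l : Fin (m + 1) → F) : Prop :=
  ∀ i : Fin m, l i.succ + p i.succ = l i.castSucc * p 0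

/-- The Wenger graph `W_m(q)` as a simple graph on `P ⊕ L`, where both `P` (points, `inl`)
and `L` (lines, `inr`) are copies of `F^{m+1}` for a finite field `F` with `q` elements. -/
def WengerGraph (F : Type*) [Field F] (m : ℕ) :
    SimpleGraph ((Fin (m + 1) → F) ⊕ (Fin (m + 1) → F)) where
  Adj x y :=
    match x, y with
    | Sum.inl p, Sum.inr l => wengerAdj p l
    | Sum.inr l, Sum.inl p => wengerAdj p l
    | _, _ => False
  symm := ⟨by rintro (p | l) (p' | l') h <;> exact h⟩
  loopless := ⟨by rintro (p | l) h <;> exact h⟩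

open scoped Classical in
/-- The (real) adjacency matrix of the Wenger graph `W_m(q)`. -/
noncomputable def wengerAdjMatrix (F : Type*) [Field F] (m : ℕ) :
    Matrix ((Fin (m + 1) → F) ⊕ (Fin (m + 1) → F)) ((Fin (m + 1) → F) ⊕ (Fin (m + 1) → F)) ℝ :=
  (WengerGraph F m).adjMatrix ℝ


section Aux
variable {F : Type*} [Field F] {m : ℕ}

def lineThrough (p : Fin (m + 1) → F) (a : F) : Fin (m + 1) → F :=
  fun i => Fin.induction a (fun j ih => ih * p 0 - p j.succ) i

@[simp] lemma lineThrough_zero (p : Fin (m + 1) → F) (a : F) : lineThrough p a 0 = a := rfl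

@[simp] lemma lineThrough_succ (p : Fin (m + 1) → F) (a : F) (j : Fin m) :
    lineThrough p a j.succ = lineThrough p a j.castSucc * p 0 - p j.succ := by
  simp [lineThrough]

def pointOn (l : Fin (m + 1) → F) (b : F) : Fin (m + 1) → F :=
  fun i => Fin.cases b (fun j => l j.castSucc * b - l j.succ) i

@[simp] lemma pointOn_zero (l : Fin (m + 1) → F) (b : F) : pointOn l b 0 = b := rfl

@[simp] lemma pointOn_succ (l : Fin (m + 1) → F) (b : F) (j : Fin m) :
    pointOn l b j.succ = l j.castSucc * b - l j.succ := by
  simp [pointOn]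

lemma wengerAdj_lineThrough (p : Fin (m + 1) → F) (a : F) : wengerAdj p (lineThrough p a) := by
  intro i; rw [lineThrough_succ]; ring

lemma wengerAdj_pointOn (l : Fin (m + 1) → F) (b : F) : wengerAdj (pointOn l b) l := by
  intro i; rw [pointOn_succ, pointOn_zero]; ring

lemma eq_lineThrough_of_adj {p l : Fin (m + 1) → F} (h : wengerAdj p l) :
    l = lineThrough p (l 0) := by
  funext i
  induction i using Fin.induction with
  | zero => rfl
  | succ j ih => rw [lineThrough_succ, ← ih]; linear_combination h j

lemma eq_pointOn_of_adj {p l : Fin (m + 1) → F} (h : wengerAdj p l) :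
    p = pointOn l (p 0) := by
  funext i
  cases i using Fin.cases with
  | zero => rfl
  | succ j => rw [pointOn_succ]; linear_combination h j

lemma adj_inl_inr {p l : Fin (m + 1) → F} :
    (WengerGraph F m).Adj (Sum.inl p) (Sum.inr l) ↔ wengerAdj p l := Iff.rfl

lemma sum_nbr_inl [Fintype F] [DecidableRel (WengerGraph F m).Adj] (p : Fin (m + 1) → F)
    (f : ((Fin (m + 1) → F) ⊕ (Fin (m + 1) → F)) → ℝ) :
    ∑ u ∈ (WengerGraph F m).neighborFinset (Sum.inl p), f u
      = ∑ a : F, f (Sum.inr (lineThrough p a)) := by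
  refine (Finset.sum_nbij' (fun a : F => (Sum.inr (lineThrough p a) : (Fin (m + 1) → F) ⊕ (Fin (m + 1) → F)))
    (fun u => match u with | Sum.inr l => l 0 | Sum.inl _ => (0 : F)) ?_ ?_ ?_ ?_ ?_).symm
  · intro a _
    exact (SimpleGraph.mem_neighborFinset _ _ _).mpr (wengerAdj_lineThrough p a)
  · intro u _; exact Finset.mem_univ _
  · intro a _; rfl
  · intro u hu
    rw [SimpleGraph.mem_neighborFinset] at hu
    match u with
    | Sum.inr l => exact congrArg Sum.inr (eq_lineThrough_of_adj hu).symm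
    | Sum.inl _ => exact absurd hu (by simp [WengerGraph])
  · intro a _; rfl

lemma sum_nbr_inr [Fintype F] [DecidableRel (WengerGraph F m).Adj] (l : Fin (m + 1) → F)
    (f : ((Fin (m + 1) → F) ⊕ (Fin (m + 1) → F)) → ℝ) :
    ∑ u ∈ (WengerGraph F m).neighborFinset (Sum.inr l), f u
      = ∑ b : F, f (Sum.inl (pointOn l b)) := by
  refine (Finset.sum_nbij' (fun b : F => (Sum.inl (pointOn l b) : (Fin (m + 1) → F) ⊕ (Fin (m + 1) → F)))
    (fun u => match u with | Sum.inl p => p 0 | Sum.inr _ => (0 : F)) ?_ ?_ ?_ ?_ ?_).symm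
  · intro b _
    exact (SimpleGraph.mem_neighborFinset _ _ _).mpr (wengerAdj_pointOn l b)
  · intro u _; exact Finset.mem_univ _
  · intro b _; rfl
  · intro u hu
    rw [SimpleGraph.mem_neighborFinset] at hu
    match u with
    | Sum.inl p => exact congrArg Sum.inl (eq_pointOn_of_adj hu).symm
    | Sum.inr _ => exact absurd hu (by simp [WengerGraph])
  · intro b _; rfl

end Aux

section Conn
variable {F : Type*} [Field F] {m : ℕ}

def pt0 (t : Fin m → F) : Fin (m + 1) → F := fun i => Fin.cases 0 t i

@[simp] lemma pt0_zero (t : Fin m → F) : pt0 t 0 = 0 := rfl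
@[simp] lemma pt0_succ (t : Fin m → F) (j : Fin m) : pt0 t j.succ = t j := by simp [pt0]

lemma adjPL {p l : Fin (m + 1) → F} (h : wengerAdj p l) :
    (WengerGraph F m).Adj (Sum.inl p) (Sum.inr l) := h

lemma key_move (t : Fin m → F) (a a' b : F) :
    (WengerGraph F m).Reachable (Sum.inl (pt0 t))
      (Sum.inl (pt0 (fun i => t i + (a - a') * b ^ ((i : ℕ) + 1)))) := by
  set l := lineThrough (pt0 t) a with hl
  set p' := pointOn l b with hp'
  set l' := lineThrough p' a' with hl'
  have hp'0 : p' 0 = b := rfl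
  have hdiff : ∀ i : Fin (m + 1), l' i = l i + (a' - a) * b ^ (i : ℕ) := by
    intro i
    induction i using Fin.induction with
    | zero =>
      simp only [hl', hl, lineThrough_zero, Fin.val_zero, pow_zero, mul_one]
      ring
    | succ j ih =>
      rw [hl', lineThrough_succ, ← hl', hp'0, ih, hp', pointOn_succ, hl, lineThrough_succ, ← hl]
      simp only [Fin.coe_castSucc, Fin.val_succ]
      ring
  have hlsucc : ∀ j : Fin m, l j.succ = - t j := by
    intro j; rw [hl, lineThrough_succ]; simp
  have hfinal : pointOn l' 0 = pt0 (fun i => t i + (a - a') * b ^ ((i : ℕ) + 1)) := by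
    funext i
    cases i using Fin.cases with
    | zero => rfl
    | succ j =>
      rw [pointOn_succ, hdiff j.succ, hlsucc j, pt0_succ]
      simp only [Fin.val_succ]
      ring
  have h1 := adjPL (wengerAdj_lineThrough (pt0 t) a)
  have h2 := adjPL (wengerAdj_pointOn l b)
  have h3 := adjPL (wengerAdj_lineThrough p' a')
  have h4 := adjPL (wengerAdj_pointOn l' 0)
  rw [hfinal] at h4
  exact h1.reachable.trans (h2.reachable.symm.trans (h3.reachable.trans h4.reachable.symm))
end Conn

section Conn2
variable {F : Type*} [Field F] {m : ℕ}

lemma key_move2 (t : Fin m → F) (c b : F) (hb : b ≠ 0) :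
    (WengerGraph F m).Reachable (Sum.inl (pt0 t))
      (Sum.inl (pt0 (fun i => t i + c * b ^ (i : ℕ)))) := by
  have h := key_move t (c * b⁻¹) 0 b
  convert h using 4 with i
  rw [pow_succ]
  field_simp
  ring

lemma key_move3 (t : Fin m → F) (ι : Fin m → F) (hι0 : ∀ j, ι j ≠ 0) (cf : Fin m → F)
    (s : Finset (Fin m)) :
    (WengerGraph F m).Reachable (Sum.inl (pt0 t))
      (Sum.inl (pt0 (fun i => t i + ∑ j ∈ s, cf j * (ι j) ^ (i : ℕ)))) := by
  classical
  induction s using Finset.induction_on with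
  | empty =>
    simp only [Finset.sum_empty, add_zero]
    rfl
  | @insert j s hj ih =>
    refine ih.trans ?_
    have h := key_move2 (fun i => t i + ∑ k ∈ s, cf k * (ι k) ^ (i : ℕ)) (cf j) (ι j) (hι0 j)
    convert h using 4 with i
    rw [Finset.sum_insert hj]
    ring

lemma points0_reachable (ι : Fin m → F) (hι : Function.Injective ι) (hι0 : ∀ j, ι j ≠ 0)
    (t t' : Fin m → F) :
    (WengerGraph F m).Reachable (Sum.inl (pt0 t)) (Sum.inl (pt0 t')) := by
  classical
  set M := Matrix.vandermonde ι with hM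
  have hdet : M.det ≠ 0 := by
    rw [hM, Matrix.det_vandermonde_ne_zero_iff]; exact hι
  set c := Matrix.vecMul (t' - t) M⁻¹ with hc
  have hsolve : Matrix.vecMul c M = t' - t := by
    rw [hc, Matrix.vecMul_vecMul, Matrix.nonsing_inv_mul M (isUnit_iff_ne_zero.mpr hdet),
      Matrix.vecMul_one]
  have h := key_move3 t ι hι0 c Finset.univ
  convert h using 3
  funext i
  have : t' i - t i = ∑ j, c j * (ι j) ^ (i : ℕ) := by
    have := congrFun hsolve i
    simpa [Matrix.vecMul, dotProduct, hM, Matrix.vandermonde] using this.symm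
  rw [← this]; ring

end Conn2

section Conn3
variable {F : Type*} [Field F] {m : ℕ}

lemma point_to_pt0 (p : Fin (m + 1) → F) :
    ∃ t : Fin m → F, (WengerGraph F m).Reachable (Sum.inl p) (Sum.inl (pt0 t)) := by
  refine ⟨fun j => pointOn (lineThrough p 0) 0 j.succ, ?_⟩
  have h1 := adjPL (wengerAdj_lineThrough p 0)
  have h2 := adjPL (wengerAdj_pointOn (lineThrough p 0) 0)
  have he : pointOn (lineThrough p 0) 0 = pt0 (fun j => pointOn (lineThrough p 0) 0 j.succ) := by
    funext i
    cases i using Fin.cases with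
    | zero => rfl
    | succ j => simp
  rw [he] at h2
  exact h1.reachable.trans h2.reachable.symm

lemma wenger_connected (ι : Fin m → F) (hι : Function.Injective ι) (hι0 : ∀ j, ι j ≠ 0)
    (v w : (Fin (m + 1) → F) ⊕ (Fin (m + 1) → F)) :
    (WengerGraph F m).Reachable v w := by
  have hpoint : ∀ p : Fin (m + 1) → F,
      (WengerGraph F m).Reachable (Sum.inl p) (Sum.inl (pt0 (fun _ => (0 : F)))) := by
    intro p
    obtain ⟨t, ht⟩ := point_to_pt0 p
    exact ht.trans (points0_reachable ι hι hι0 t _)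
  have hv : ∀ u : (Fin (m + 1) → F) ⊕ (Fin (m + 1) → F),
      (WengerGraph F m).Reachable u (Sum.inl (pt0 (fun _ => (0 : F)))) := by
    rintro (p | l)
    · exact hpoint p
    · exact ((adjPL (wengerAdj_pointOn l 0)).reachable.symm).trans (hpoint (pointOn l 0))
  exact (hv v).trans (hv w).symm

end Conn3

section Harmonic
variable {F : Type*} [Field F] [Fintype F] {m : ℕ}

lemma degree_q [DecidableRel (WengerGraph F m).Adj]
    (v : (Fin (m + 1) → F) ⊕ (Fin (m + 1) → F)) :
    ∑ u ∈ (WengerGraph F m).neighborFinset v, (1 : ℝ) = (Fintype.card F : ℝ) := by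
  match v with
  | Sum.inl p => rw [sum_nbr_inl]; simp
  | Sum.inr l => rw [sum_nbr_inr]; simp

lemma harmonic_const [DecidableRel (WengerGraph F m).Adj]
    (hconn : ∀ v w, (WengerGraph F m).Reachable v w)
    (g : ((Fin (m + 1) → F) ⊕ (Fin (m + 1) → F)) → ℝ)
    (hg : ∀ v, (Fintype.card F : ℝ) * g v = ∑ u ∈ (WengerGraph F m).neighborFinset v, g u)
    (v w : (Fin (m + 1) → F) ⊕ (Fin (m + 1) → F)) : g v = g w := by
  classical
  obtain ⟨v₀, -, hv₀⟩ := Finset.exists_max_image Finset.univ g ⟨Sum.inl 0, Finset.mem_univ _⟩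
  have hv₀' : ∀ u, g u ≤ g v₀ := fun u => hv₀ u (Finset.mem_univ u)
  have step : ∀ x y, (WengerGraph F m).Adj x y → g x = g v₀ → g y = g v₀ := by
    intro x y hxy hx
    by_contra hy
    have hlt : g y < g v₀ := lt_of_le_of_ne (hv₀' y) hy
    have hsum : ∑ u ∈ (WengerGraph F m).neighborFinset x, g u
        < ∑ u ∈ (WengerGraph F m).neighborFinset x, g v₀ := by
      refine Finset.sum_lt_sum (fun u _ => hv₀' u) ⟨y, ?_, hlt⟩
      exact (SimpleGraph.mem_neighborFinset _ _ _).mpr hxy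
    rw [Finset.sum_const, nsmul_eq_mul] at hsum
    have hdeg : ((WengerGraph F m).neighborFinset x).card = Fintype.card F := by
      have := degree_q (F := F) (m := m) x
      rw [Finset.sum_const, nsmul_eq_mul, mul_one] at this
      exact_mod_cast this
    rw [hdeg, ← hg x, hx] at hsum
    exact lt_irrefl _ hsum
  have reach : ∀ (x y : (Fin (m + 1) → F) ⊕ (Fin (m + 1) → F))
      (w : (WengerGraph F m).Walk x y), g x = g v₀ → g y = g v₀ := by
    intro x y w
    induction w with
    | nil => exact id
    | cons h p ih => exact fun hx => ih (step _ _ h hx)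
  have hall : ∀ x, g x = g v₀ := fun x => reach v₀ x (hconn v₀ x).some rfl
  rw [hall v, hall w]

end Harmonic

/-- For a prime power `q` and `1 ≤ m ≤ q − 1`, the eigenvalues `q` and
`−q` of the adjacency matrix of `W_m(q)` each have multiplicity exactly `1`. -/
theorem wenger_extreme_eigenvalue_multiplicity (q m : ℕ) (F : Type) [Field F] [Fintype F]
    (hq : Fintype.card F = q) (hm1 : 1 ≤ m) (hm2 : m ≤ q - 1) :
    Module.finrank ℝ
        (Module.End.eigenspace ((wengerAdjMatrix F m).mulVecLin) (q : ℝ)) = 1 ∧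
    Module.finrank ℝ
        (Module.End.eigenspace ((wengerAdjMatrix F m).mulVecLin) (-(q : ℝ))) = 1 := by
  classical
  -- an injective family of nonzero field elements
  have hcard : Fintype.card (Fin m) ≤ Fintype.card Fˣ := by
    rw [Fintype.card_fin, Fintype.card_units, hq]; exact hm2
  obtain ⟨e⟩ := Function.Embedding.nonempty_of_card_le hcard
  set ι : Fin m → F := fun j => (e j : F) with hι_def
  have hι : Function.Injective ι := fun j k h => e.injective (Units.ext h)
  have hι0 : ∀ j, ι j ≠ 0 := fun j => (e j).ne_zero
  have hconn := wenger_connected ι hι hι0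
  -- matrix action
  have hA : ∀ (g : ((Fin (m + 1) → F) ⊕ (Fin (m + 1) → F)) → ℝ) v,
      (wengerAdjMatrix F m).mulVecLin g v
        = ∑ u ∈ (WengerGraph F m).neighborFinset v, g u := by
    intro g v
    rw [Matrix.mulVecLin_apply, wengerAdjMatrix, SimpleGraph.adjMatrix_mulVec_apply]
  set V := ((Fin (m + 1) → F) ⊕ (Fin (m + 1) → F))
  set ones : V → ℝ := fun _ => (1 : ℝ) with hones_def
  set sg : V → ℝ := Sum.elim (fun _ => (1 : ℝ)) (fun _ => (-1 : ℝ)) with hsg_def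
  have hones : (wengerAdjMatrix F m).mulVecLin ones = (q : ℝ) • ones := by
    funext v
    rw [hA]
    have := degree_q (F := F) (m := m) v
    simp only [hones_def, Pi.smul_apply, smul_eq_mul, mul_one]
    rw [this, hq]
  have hsg : (wengerAdjMatrix F m).mulVecLin sg = (-(q : ℝ)) • sg := by
    funext v
    rw [hA]
    match v with
    | Sum.inl p =>
      rw [sum_nbr_inl]
      simp [hsg_def, hq]
    | Sum.inr l =>
      rw [sum_nbr_inr]
      simp [hsg_def, hq]
  constructor
  · have hspan : Module.End.eigenspace ((wengerAdjMatrix F m).mulVecLin) (q : ℝ)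
        = Submodule.span ℝ {ones} := by
      apply le_antisymm
      · intro g hg
        rw [Module.End.mem_eigenspace_iff] at hg
        have hharm : ∀ v, (Fintype.card F : ℝ) * g v
            = ∑ u ∈ (WengerGraph F m).neighborFinset v, g u := by
          intro v
          rw [← hA, hg, Pi.smul_apply, smul_eq_mul, hq]
        have hc := harmonic_const hconn g hharm
        rw [Submodule.mem_span_singleton]
        refine ⟨g (Sum.inl 0), funext fun v => ?_⟩
        rw [Pi.smul_apply, hones_def, smul_eq_mul, mul_one]
        exact hc (Sum.inl 0) v
      · rw [Submodule.span_le, Set.singleton_subset_iff]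
        exact Module.End.mem_eigenspace_iff.mpr hones
    rw [hspan]
    refine finrank_span_singleton fun h => ?_
    have := congrFun h (Sum.inl 0)
    simp [hones_def] at this
  · have hspan : Module.End.eigenspace ((wengerAdjMatrix F m).mulVecLin) (-(q : ℝ))
        = Submodule.span ℝ {sg} := by
      apply le_antisymm
      · intro g hg
        rw [Module.End.mem_eigenspace_iff] at hg
        set h : V → ℝ := Sum.elim (fun p => g (Sum.inl p)) (fun l => -g (Sum.inr l)) with hh_def
        have hharm : ∀ v, (Fintype.card F : ℝ) * h v
            = ∑ u ∈ (WengerGraph F m).neighborFinset v, h u := by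
          intro v
          match v with
          | Sum.inl p =>
            rw [sum_nbr_inl]
            have h1 : ∑ a : F, h (Sum.inr (lineThrough p a))
                = -∑ a : F, g (Sum.inr (lineThrough p a)) := by
              simp [hh_def]
            have h2 : ∑ a : F, g (Sum.inr (lineThrough p a))
                = ∑ u ∈ (WengerGraph F m).neighborFinset (Sum.inl p), g u :=
              (sum_nbr_inl p g).symm
            rw [h1, h2, ← hA, hg, Pi.smul_apply, smul_eq_mul]
            simp [hh_def, hq]
          | Sum.inr l =>
            rw [sum_nbr_inr]
            have h1 : ∑ b : F, h (Sum.inl (pointOn l b))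
                = ∑ b : F, g (Sum.inl (pointOn l b)) := by
              simp [hh_def]
            have h2 : ∑ b : F, g (Sum.inl (pointOn l b))
                = ∑ u ∈ (WengerGraph F m).neighborFinset (Sum.inr l), g u :=
              (sum_nbr_inr l g).symm
            rw [h1, h2, ← hA, hg, Pi.smul_apply, smul_eq_mul]
            simp [hh_def, hq]
        have hc := harmonic_const hconn h hharm
        rw [Submodule.mem_span_singleton]
        refine ⟨g (Sum.inl 0), funext fun v => ?_⟩
        match v with
        | Sum.inl p =>
          have := hc (Sum.inl 0) (Sum.inl p)
          simp only [hh_def, Sum.elim_inl] at this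
          rw [Pi.smul_apply, hsg_def, Sum.elim_inl, smul_eq_mul, mul_one]
          exact this
        | Sum.inr l =>
          have := hc (Sum.inl 0) (Sum.inr l)
          simp only [hh_def, Sum.elim_inl, Sum.elim_inr] at this
          rw [Pi.smul_apply, hsg_def, Sum.elim_inr, smul_eq_mul]
          linarith
      · rw [Submodule.span_le, Set.singleton_subset_iff]
        exact Module.End.mem_eigenspace_iff.mpr hsg
    rw [hspan]
    refine finrank_span_singleton fun h => ?_
    have := congrFun h (Sum.inl 0)
    simp [hsg_def] at this
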